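/- Let G be a connected finite simple graph on n vertices with δ̂-thin triangles whose distance satisfies the four-point condition with constant δ, let b > 1 and 0 < c ≤ 1, suppose d(u₀,v₀) = diam(G) is even for some pair u₀, v₀, and let r be the vertex at distance diam(G)/2 from u₀ on a shortest walk from u₀ to v₀. Assume: (1) for every maximal shortest walk α from u to v of length at least diam(G) − (δ̂ + 2·log_b(2/c)), each of the two sets {z : d(z,u) < d(z,v)} and {z : d(z,v) < d(z,u)} contains at least c·n vertices; (2) for every natural number k with 2k ≤ diam(G), the number n_k of vertices at distance exactly k from r satisfies c·b^k ≤ n_k ≤ c⁻¹·b^k; and (3) diam(G) > 3δ̂ + 6·log_b(2/c). Then there exists a set S of at least (3c³/8)·n² unordered pairs of vertices such that for every pair {x,y} ∈ S, every shortest walk from x to y contains a vertex w with d(r,w) ≤ log_b(2/c) + 6.5·δ̂ + 2δ. -/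

import Mathlib

/-- The Gromov product `(x.y)_r` with respect to the shortest-path distance of a graph. -/
noncomputable def gp {V : Type*} (G : SimpleGraph V) (r x y : V) : ℝ :=
  ((G.dist x r : ℝ) + (G.dist y r : ℝ) - (G.dist x y : ℝ)) / 2

/-- `G` has `δ`-thin triangles. -/
def ThinTriangles {V : Type*} (G : SimpleGraph V) (δ : ℝ) : Prop :=
  ∀ x y z : V, ∀ p : G.Walk x y, ∀ q : G.Walk x z,
    p.length = G.dist x y → q.length = G.dist x z →
    ∀ k : ℕ, (k : ℝ) ≤ gp G x y z →
      (G.dist (p.getVert k) (q.getVert k) : ℝ) ≤ δ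

/-- `α` is a maximal shortest walk (geodesic): it is a shortest walk and it is not a
proper subwalk of another shortest walk. -/
def IsMaximalGeodesic {V : Type*} (G : SimpleGraph V) {u v : V} (α : G.Walk u v) : Prop :=
  α.length = G.dist u v ∧
  ∀ (u' v' : V) (β : G.Walk u' v'), β.length = G.dist u' v' →
    (∃ off : ℕ, off + α.length ≤ β.length ∧
      ∀ i ≤ α.length, β.getVert (off + i) = α.getVert i) →
    β.length = α.length

open Finset SimpleGraph

section StmtAux
variable {V : Type*} {G : SimpleGraph V}

lemma aux_dist_left_le (hconn : G.Connected) {a b : V} (p : G.Walk a b) (i : ℕ) :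
    G.dist a (p.getVert i) ≤ i := by
  induction i with
  | zero => simp
  | succ i ih =>
    rcases lt_or_ge i p.length with h | h
    · have hadj := p.adj_getVert_succ h
      have h1 : G.dist (p.getVert i) (p.getVert (i+1)) ≤ 1 := by
        simpa using G.dist_le (SimpleGraph.Walk.cons hadj SimpleGraph.Walk.nil)
      have h2 := hconn.dist_triangle (u := a) (v := p.getVert i) (w := p.getVert (i+1))
      omega
    · rw [p.getVert_of_length_le (by omega), ← p.getVert_of_length_le h]
      exact le_trans ih (by omega)

lemma aux_geo_left (hconn : G.Connected) {a b : V} {p : G.Walk a b}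
    (hp : p.length = G.dist a b) {i : ℕ} (hi : i ≤ p.length) :
    G.dist a (p.getVert i) = i := by
  have h1 := aux_dist_left_le hconn p i
  have h2 : G.dist b (p.getVert i) ≤ p.length - i := by
    have := aux_dist_left_le hconn p.reverse (p.length - i)
    rwa [p.getVert_reverse, show p.length - (p.length - i) = i by omega,
      ← SimpleGraph.Walk.length_reverse p, SimpleGraph.Walk.length_reverse] at this
  have h3 := hconn.dist_triangle (u := a) (v := p.getVert i) (w := b)
  have h4 : G.dist (p.getVert i) b = G.dist b (p.getVert i) := SimpleGraph.dist_comm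
  omega

lemma aux_geo_right (hconn : G.Connected) {a b : V} {p : G.Walk a b}
    (hp : p.length = G.dist a b) {i : ℕ} (hi : i ≤ p.length) :
    G.dist (p.getVert i) b + i = p.length := by
  have h1 := aux_dist_left_le hconn p i
  have h2 : G.dist b (p.getVert i) ≤ p.length - i := by
    have := aux_dist_left_le hconn p.reverse (p.length - i)
    rwa [p.getVert_reverse, show p.length - (p.length - i) = i by omega,
      ← SimpleGraph.Walk.length_reverse p, SimpleGraph.Walk.length_reverse] at this
  have h3 := hconn.dist_triangle (u := a) (v := p.getVert i) (w := b)
  have h4 : G.dist (p.getVert i) b = G.dist b (p.getVert i) := SimpleGraph.dist_comm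
  omega

lemma aux_merge {δ' : ℝ} (hconn : G.Connected) (hthin : ThinTriangles G δ')
    {u v z : V} (pw : G.Walk u v) (hpw : pw.length = G.dist u v) {m : ℕ}
    (hDm : G.dist u v = 2 * m) {r : V} (hrr : pw.getVert m = r)
    (hzv : G.dist z v ≤ G.dist z u) :
    (G.dist z r : ℝ) + m ≤ G.dist u z + δ' := by
  obtain ⟨q, hq⟩ := hconn.exists_walk_length_eq_dist u z
  have hzu : G.dist z u = G.dist u z := SimpleGraph.dist_comm
  have hzv' : G.dist z v = G.dist v z := SimpleGraph.dist_comm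
  have hvu : G.dist v u = G.dist u v := SimpleGraph.dist_comm
  have htri : G.dist u v ≤ G.dist u z + G.dist z v := hconn.dist_triangle
  have hml : m ≤ G.dist u z := by omega
  have hk : (m : ℝ) ≤ gp G u v z := by
    unfold gp
    have h1 : G.dist v z ≤ G.dist u z := by omega
    have c1 : (G.dist v z : ℝ) ≤ (G.dist u z : ℝ) := by exact_mod_cast h1
    have c2 : (G.dist v u : ℝ) = 2 * m := by exact_mod_cast hvu.trans hDm
    have c5 : (G.dist z u : ℝ) = (G.dist u z : ℝ) := by exact_mod_cast hzu
    linarith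
  have hthin' := hthin u v z pw q hpw hq m hk
  rw [hrr] at hthin'
  have hgr : G.dist (q.getVert m) z + m = q.length :=
    aux_geo_right hconn hq (by omega)
  have tri2 : G.dist z r ≤ G.dist z (q.getVert m) + G.dist (q.getVert m) r :=
    hconn.dist_triangle
  have e1 : G.dist z (q.getVert m) = G.dist (q.getVert m) z := SimpleGraph.dist_comm
  have e2 : G.dist (q.getVert m) r = G.dist r (q.getVert m) := SimpleGraph.dist_comm
  have c3 : (G.dist (q.getVert m) z : ℝ) + m = G.dist u z := by
    exact_mod_cast congrArg Nat.cast (by omega : G.dist (q.getVert m) z + m = G.dist u z)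
  have c4 : (G.dist z r : ℝ) ≤ (G.dist (q.getVert m) z : ℝ) + (G.dist r (q.getVert m) : ℝ) := by
    rw [← e1, ← e2]; exact_mod_cast tri2
  linarith [c3, c4, hthin']

lemma aux_ext (hdle : ∀ x y : V, G.dist x y ≤ G.diam) :
    ∀ (N : ℕ) {a b : V} (g : G.Walk a b), g.length = G.dist a b →
      G.diam ≤ g.length + N →
      ∃ (u' v' : V) (α : G.Walk u' v'), IsMaximalGeodesic G α ∧
        ∃ off : ℕ, off + g.length ≤ α.length ∧
          ∀ i ≤ g.length, α.getVert (off + i) = g.getVert i := by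
  intro N
  induction N with
  | zero =>
    intro a b g hg hN
    refine ⟨a, b, g, ⟨hg, ?_⟩, 0, by omega, fun i _ => by rw [Nat.zero_add]⟩
    intro u' v' β hβ ⟨off, h1, _⟩
    have := hdle u' v'
    omega
  | succ N ih =>
    intro a b g hg hN
    by_cases hM : IsMaximalGeodesic G g
    · exact ⟨a, b, g, hM, 0, by omega, fun i _ => by rw [Nat.zero_add]⟩
    · rw [IsMaximalGeodesic] at hM
      push_neg at hM
      obtain ⟨u', v', β, hβ, ⟨off, hoff1, hoff2⟩, hne⟩ := hM hg
      obtain ⟨u'', v'', α, hα, off', hoff1', hoff2'⟩ := ih β hβ (by have := hdle u' v'; omega)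
      refine ⟨u'', v'', α, hα, off' + off, by omega, fun i hi => ?_⟩
      have h1 : off + i ≤ β.length := by omega
      have := hoff2' (off + i) h1
      rw [show off' + off + i = off' + (off + i) by omega, this, hoff2 i hi]

set_option maxHeartbeats 1000000 in
lemma core_one [Fintype V] {δ' δ c L : ℝ} {n N m : ℕ}
    (hconn : G.Connected) (hn : Fintype.card V = n)
    (hδ'0 : 0 ≤ δ') (hδ0 : 0 ≤ δ) (hL : 0 < L)
    (hN1 : L + 5.5 * δ' + 2 * δ < N + 1)
    (hthin : ThinTriangles G δ')
    (hfour : ∀ a₁ a₂ a₃ a₄ : V, (G.dist a₁ a₂ : ℝ) + (G.dist a₃ a₄ : ℝ) ≤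
      max ((G.dist a₁ a₃ : ℝ) + (G.dist a₂ a₄ : ℝ))
        ((G.dist a₁ a₄ : ℝ) + (G.dist a₂ a₃ : ℝ)) + 2 * δ)
    (hbal : ∀ (u v : V) (α : G.Walk u v), IsMaximalGeodesic G α →
      (α.length : ℝ) ≥ (G.diam : ℝ) - (δ' + 2 * L) →
      c * n ≤ ((Finset.univ.filter fun z : V => G.dist z u < G.dist z v).card : ℝ))
    (hdle : ∀ x y : V, G.dist x y ≤ G.diam)
    {u v r : V} (pw : G.Walk u v) (hpw : pw.length = G.dist u v)
    (hDm : G.dist u v = 2 * m) (hdia : G.dist u v = G.diam)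
    (hrr : pw.getVert m = r)
    {z : V} (hdeep : (m : ℝ) - 2 * L ≤ G.dist z r)
    (hzv : G.dist z v ≤ G.dist z u) :
    c * n ≤ ((Finset.univ.filter fun w : V =>
      G.dist z r + G.dist w r ≤ 2 * N + G.dist z w).card : ℝ) := by
  classical
  obtain ⟨q, hq⟩ := hconn.exists_walk_length_eq_dist u z
  have hT1 : (G.dist z r : ℝ) + m ≤ G.dist u z + δ' :=
    aux_merge hconn hthin pw hpw hDm hrr hzv
  obtain ⟨u', v', α, hmax, off, hoff, hgv⟩ := aux_ext hdle G.diam q hq (by omega)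
  have hlenα : α.length = G.dist u' v' := hmax.1
  have hαdiam : α.length ≤ G.diam := hlenα ▸ hdle u' v'
  -- positions of u and z on α
  have hpos0 : α.getVert off = u := by
    have := hgv 0 (Nat.zero_le _)
    simpa using this
  have hposz : α.getVert (off + q.length) = z := by
    have := hgv q.length le_rfl
    simpa using this
  have d1 : G.dist u' u = off := by
    have := aux_geo_left hconn hlenα (i := off) (by omega)
    rwa [hpos0] at this
  have d2 : G.dist u' z = off + q.length := by
    have := aux_geo_left hconn hlenα (i := off + q.length) (by omega)
    rwa [hposz] at this
  have d3 : G.dist z v' + (off + q.length) = α.length := by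
    have := aux_geo_right hconn hlenα (i := off + q.length) (by omega)
    rwa [hposz] at this
  have dur : G.dist u r = m := by
    have := aux_geo_left hconn hpw (i := m) (by omega)
    rwa [hrr] at this
  -- threshold for hbal
  have hdiam2m : G.diam = 2 * m := hdia ▸ hDm
  have hthr : (α.length : ℝ) ≥ (G.diam : ℝ) - (δ' + 2 * L) := by
    have h1 : q.length ≤ α.length := by omega
    have c1 : (q.length : ℝ) ≤ (α.length : ℝ) := by exact_mod_cast h1
    have c2 : ((G.diam : ℕ) : ℝ) = 2 * m := by exact_mod_cast hdiam2m
    have c3 : (q.length : ℝ) = G.dist u z := by exact_mod_cast hq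
    linarith [hdeep, hT1]
  have hU := hbal u' v' α hmax hthr
  -- the side of u' consists of good partners of z
  have hsub : (Finset.univ.filter fun w : V => G.dist w u' < G.dist w v') ⊆
      (Finset.univ.filter fun w : V =>
        G.dist z r + G.dist w r ≤ 2 * N + G.dist z w) := by
    intro w hw
    simp only [Finset.mem_filter, Finset.mem_univ, true_and] at hw ⊢
    by_contra hcon
    push_neg at hcon
    -- cast facts
    have F1 : (G.dist z r : ℝ) + m ≤ (G.dist u z : ℝ) + δ' := hT1
    have F2 : (G.dist z u' : ℝ) = off + (G.dist u z : ℝ) := by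
      rw [SimpleGraph.dist_comm (u := z) (v := u')]
      push_cast [d2, hq]
      ring
    have F3 : (G.dist z v' : ℝ) + off + (G.dist u z : ℝ) = (α.length : ℝ) := by
      have : G.dist z v' + (off + G.dist u z) = α.length := by rw [← hq]; exact d3
      push_cast [← this]
      ring
    have F4 : (α.length : ℝ) ≤ 2 * m := by
      have : α.length ≤ 2 * m := by omega
      exact_mod_cast this
    have F5 : (G.dist u' r : ℝ) ≤ off + m := by
      have tri : G.dist u' r ≤ G.dist u' u + G.dist u r := hconn.dist_triangle
      have : G.dist u' r ≤ off + m := by omega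
      exact_mod_cast this
    have F6 : (G.dist w v' : ℝ) ≤ (G.dist z w : ℝ) + (G.dist z v' : ℝ) := by
      have tri : G.dist w v' ≤ G.dist w z + G.dist z v' := hconn.dist_triangle
      have cc : G.dist w z = G.dist z w := SimpleGraph.dist_comm
      have : G.dist w v' ≤ G.dist z w + G.dist z v' := by omega
      exact_mod_cast this
    have F7 : 2 * (N : ℝ) + 1 + (G.dist z w : ℝ) ≤ (G.dist z r : ℝ) + (G.dist w r : ℝ) := by
      have : 2 * N + 1 + G.dist z w ≤ G.dist z r + G.dist w r := by omega
      exact_mod_cast this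
    have F8 : (G.dist u' w : ℝ) = (G.dist w u' : ℝ) := by
      exact_mod_cast congrArg Nat.cast (SimpleGraph.dist_comm (u := u') (v := w))
    have Hf := hfour z u' w r
    have hNnn : (0 : ℝ) ≤ N := Nat.cast_nonneg N
    -- the key: d w v' ≤ d w u' (in ℝ)
    have key : (G.dist w v' : ℝ) ≤ (G.dist w u' : ℝ) := by
      rcases le_total ((G.dist z w : ℝ) + (G.dist u' r : ℝ))
        ((G.dist z r : ℝ) + (G.dist u' w : ℝ)) with hcase | hcase
      · rw [max_eq_right hcase] at Hf
        -- zone fact : 2δ' + 2δ ≤ 2N+1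
        have hzone : 2 * δ' + 2 * δ ≤ 2 * (N : ℝ) + 1 := by
          rcases le_or_gt (2 * δ' + 2 * δ) 1 with hz | hz
          · linarith
          · nlinarith [hL, hδ'0, hδ0]
        linarith [Hf, F1, F2, F3, F4, F5, F6, F7, F8]
      · rw [max_eq_left hcase] at Hf
        exfalso
        have hzone2 : δ' + 2 * δ < 2 * (N : ℝ) + 1 := by
          rcases le_or_gt (δ' + 2 * δ) 1 with hz | hz
          · linarith
          · nlinarith [hL, hδ'0, hδ0]
        linarith [Hf, F1, F2, F5, F7]
    have : G.dist w v' ≤ G.dist w u' := by exact_mod_cast key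
    omega
  refine le_trans hU ?_
  have hcard := Finset.card_le_card hsub
  exact_mod_cast hcard

end StmtAux

set_option maxHeartbeats 1600000 in
/-- In a balanced hyperbolic network, there are at least `(3c³/8)·n²` unordered pairs of
vertices all of whose shortest walks pass within `log_b(2/c) + 6.5δ̂ + 2δ` of the
center `r`. -/
theorem stmt17 {V : Type*} [Fintype V] (G : SimpleGraph V) (hconn : G.Connected)
    (n : ℕ) (hn : Fintype.card V = n)
    (δ' δ b c : ℝ) (hδ' : 0 ≤ δ') (hδ : 0 ≤ δ) (hb : 1 < b) (hc0 : 0 < c) (hc1 : c ≤ 1)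
    (hthin : ThinTriangles G δ')
    (hfour : ∀ a₁ a₂ a₃ a₄ : V, (G.dist a₁ a₂ : ℝ) + (G.dist a₃ a₄ : ℝ) ≤
      max ((G.dist a₁ a₃ : ℝ) + (G.dist a₂ a₄ : ℝ))
        ((G.dist a₁ a₄ : ℝ) + (G.dist a₂ a₃ : ℝ)) + 2 * δ)
    (u₀ v₀ : V) (h₀ : G.dist u₀ v₀ = G.diam) (he₀ : Even (G.dist u₀ v₀))
    (p₀ : G.Walk u₀ v₀) (hp₀ : p₀.length = G.dist u₀ v₀)
    (hbal1 : ∀ (u v : V) (α : G.Walk u v), IsMaximalGeodesic G α →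
      (α.length : ℝ) ≥ (G.diam : ℝ) - (δ' + 2 * Real.logb b (2 / c)) →
      c * n ≤ ((Finset.univ.filter fun z : V => G.dist z u < G.dist z v).card : ℝ) ∧
      c * n ≤ ((Finset.univ.filter fun z : V => G.dist z v < G.dist z u).card : ℝ))
    (hbal2 : ∀ k : ℕ, 2 * k ≤ G.diam →
      c * b ^ k ≤
          ((Finset.univ.filter
            fun a : V => G.dist a (p₀.getVert (G.dist u₀ v₀ / 2)) = k).card : ℝ) ∧
      ((Finset.univ.filter
          fun a : V => G.dist a (p₀.getVert (G.dist u₀ v₀ / 2)) = k).card : ℝ) ≤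
        c⁻¹ * b ^ k)
    (hdiam : (G.diam : ℝ) > 3 * δ' + 6 * Real.logb b (2 / c)) :
    ∃ S : Finset (Sym2 V), (3 * c ^ 3 / 8) * (n : ℝ) ^ 2 ≤ (S.card : ℝ) ∧
      ∀ x y : V, s(x, y) ∈ S → ∀ q : G.Walk x y, q.length = G.dist x y →
        ∃ w ∈ q.support,
          (G.dist (p₀.getVert (G.dist u₀ v₀ / 2)) w : ℝ) ≤
            Real.logb b (2 / c) + 6.5 * δ' + 2 * δ := by
  classical
  obtain ⟨m, hm⟩ := he₀
  have hDm : G.dist u₀ v₀ = 2 * m := by omega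
  have hm2 : G.dist u₀ v₀ / 2 = m := by omega
  set r : V := p₀.getVert (G.dist u₀ v₀ / 2) with hrdef
  have hrr : p₀.getVert m = r := by rw [hrdef, hm2]
  set L : ℝ := Real.logb b (2 / c) with hLdef
  have hb0 : (0 : ℝ) < b := by linarith
  have hbne : b ≠ 1 := by linarith
  have h2c : (1 : ℝ) < 2 / c := by rw [lt_div_iff₀ hc0]; linarith
  have hL : 0 < L := Real.logb_pos hb h2c
  have hbL : b ^ L = 2 / c := Real.rpow_logb hb0 hbne (by linarith)
  -- every distance is at most the diameter
  have hdle : ∀ x y : V, G.dist x y ≤ G.diam := by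
    intro x y
    apply SimpleGraph.dist_le_diam
    have hne : Nonempty V := hconn.nonempty
    obtain ⟨a, b', hab⟩ := G.exists_edist_eq_ediam_of_finite
    rw [← hab]
    exact SimpleGraph.edist_ne_top_iff_reachable.mpr (hconn.preconnected a b')
  have hdiam2m : G.diam = 2 * m := by omega
  have hdiamR : ((G.diam : ℕ) : ℝ) = 2 * m := by exact_mod_cast hdiam2m
  -- the integer radius
  set θ : ℝ := L + 5.5 * δ' + 2 * δ with hθdef
  set N : ℕ := ⌊θ⌋₊ with hNdef
  have hθ0 : 0 ≤ θ := by rw [hθdef]; linarith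
  have hNθ : (N : ℝ) ≤ θ := Nat.floor_le hθ0
  have hN1 : θ < N + 1 := Nat.lt_floor_add_one θ
  -- spheres
  have hsph := fun (k : ℕ) (hk : k ≤ m) => hbal2 k (by omega)
  -- n is large
  have hmge : 3 * L < (m : ℝ) := by linarith [hdiam]
  have hbm : (2 / c) ^ (3 : ℕ) ≤ (b : ℝ) ^ m := by
    calc (2 / c) ^ (3 : ℕ) = (b ^ L) ^ (3 : ℕ) := by rw [hbL]
      _ = b ^ (L * 3) := by
          rw [← Real.rpow_natCast (b ^ L) 3, ← Real.rpow_mul (le_of_lt hb0)]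
          norm_num
      _ ≤ b ^ ((m : ℕ) : ℝ) :=
          Real.rpow_le_rpow_of_exponent_le (le_of_lt hb) (by push_cast; linarith)
      _ = b ^ m := Real.rpow_natCast b m
  have hn8 : 8 / c ^ 2 ≤ (n : ℝ) := by
    have h1 := (hsph m le_rfl).1
    have h2 : ((Finset.univ.filter fun a : V => G.dist a r = m).card : ℝ) ≤ n := by
      rw [← hn, ← Finset.card_univ]
      exact_mod_cast Finset.card_filter_le _ _
    have h3 : c * (2 / c) ^ (3 : ℕ) ≤ c * b ^ m := by
      exact mul_le_mul_of_nonneg_left hbm hc0.le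
    have he : c * (2 / c) ^ (3 : ℕ) = 8 / c ^ 2 := by field_simp; ring
    linarith
  have hn0 : (0 : ℝ) < n := by
    have : (0 : ℝ) < 8 / c ^ 2 := by positivity
    linarith
  -- p₀ is a maximal geodesic
  have hmaxp₀ : IsMaximalGeodesic G p₀ := by
    refine ⟨hp₀, ?_⟩
    rintro u' v' β hβ ⟨off, h1, _⟩
    have := hdle u' v'
    omega
  have hAB := hbal1 u₀ v₀ p₀ hmaxp₀ (by
    have h1 : (p₀.length : ℝ) = ((G.diam : ℕ) : ℝ) := by exact_mod_cast hp₀.trans h₀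
    have h2 : (0 : ℝ) ≤ δ' + 2 * L := by linarith
    linarith)
  -- c is at most 1/2
  have hc2 : c ≤ 1 / 2 := by
    by_contra hcgt
    push_neg at hcgt
    have hdisj : Disjoint (Finset.univ.filter fun z : V => G.dist z u₀ < G.dist z v₀)
        (Finset.univ.filter fun z : V => G.dist z v₀ < G.dist z u₀) := by
      rw [Finset.disjoint_left]
      intro z hz1 hz2
      simp only [Finset.mem_filter] at hz1 hz2
      omega
    have hun := Finset.card_union_of_disjoint hdisj
    have hle : ((Finset.univ.filter fun z : V => G.dist z u₀ < G.dist z v₀) ∪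
        (Finset.univ.filter fun z : V => G.dist z v₀ < G.dist z u₀)).card ≤ n := by
      rw [← hn, ← Finset.card_univ]
      exact Finset.card_le_card (Finset.subset_univ _)
    have hc' : ((Finset.univ.filter fun z : V => G.dist z u₀ < G.dist z v₀).card : ℝ) +
        ((Finset.univ.filter fun z : V => G.dist z v₀ < G.dist z u₀).card : ℝ) ≤ n := by
      rw [← Nat.cast_add]
      exact_mod_cast hun ▸ hle
    nlinarith [hAB.1, hAB.2]
  -- counting shallow vertices
  set t₀ : ℕ := ⌈2 * L⌉₊ with ht₀
  set I : Finset ℕ := (Finset.range (m + 1)).filter (fun k => (k : ℝ) < (m : ℝ) - 2 * L)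
    with hI
  have hIm : ∀ k ∈ I, k ≤ m ∧ k + t₀ ≤ m := by
    intro k hk
    rw [hI, Finset.mem_filter, Finset.mem_range] at hk
    have h1 : (k : ℝ) < m - 2 * L := hk.2
    have h2 : (t₀ : ℝ) < 2 * L + 1 := Nat.ceil_lt_add_one (by linarith)
    have h3 : ((k + t₀ : ℕ) : ℝ) < (m : ℝ) + 1 := by push_cast; linarith
    have h4 : k + t₀ < m + 1 := by exact_mod_cast h3
    omega
  have hbt₀ : 4 / c ^ 2 ≤ (b : ℝ) ^ t₀ := by
    calc (4 : ℝ) / c ^ 2 = (b ^ L) ^ (2 : ℕ) := by rw [hbL]; field_simp; ring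
      _ = b ^ (L * 2) := by
          rw [← Real.rpow_natCast (b ^ L) 2, ← Real.rpow_mul (le_of_lt hb0)]
          norm_num
      _ ≤ b ^ ((t₀ : ℕ) : ℝ) := by
          refine Real.rpow_le_rpow_of_exponent_le (le_of_lt hb) ?_
          have := Nat.le_ceil (2 * L)
          rw [← ht₀] at this
          linarith
      _ = b ^ t₀ := Real.rpow_natCast b t₀
  have hgeom : ∑ k ∈ I, (b : ℝ) ^ k * b ^ t₀ ≤ ∑ k ∈ Finset.range (m + 1), (b : ℝ) ^ k := by
    have h1 : ∀ k ∈ I, (b : ℝ) ^ k * b ^ t₀ = b ^ (k + t₀) := fun k _ => (pow_add b k t₀).symm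
    rw [Finset.sum_congr rfl h1]
    have him := Finset.sum_image (s := I) (g := fun k => k + t₀)
      (f := fun j : ℕ => (b : ℝ) ^ j) (fun x _ y _ h => Nat.add_right_cancel h)
    rw [← him]
    refine Finset.sum_le_sum_of_subset_of_nonneg ?_ (fun j _ _ => by positivity)
    intro j hj
    rw [Finset.mem_image] at hj
    obtain ⟨k, hk, rfl⟩ := hj
    rw [Finset.mem_range]
    have := (hIm k hk).2
    omega
  have hsumcard : c * ∑ k ∈ Finset.range (m + 1), (b : ℝ) ^ k ≤ n := by
    have h1 : ∀ k ∈ Finset.range (m + 1), c * (b : ℝ) ^ k ≤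
        ((Finset.univ.filter fun a : V => G.dist a r = k).card : ℝ) := by
      intro k hk
      rw [Finset.mem_range] at hk
      exact (hsph k (by omega)).1
    have h2 : ∑ k ∈ Finset.range (m + 1), ((Finset.univ.filter
        fun a : V => G.dist a r = k).card : ℝ) ≤ n := by
      have hdisj : ∀ x ∈ Finset.range (m + 1), ∀ y ∈ Finset.range (m + 1), x ≠ y →
          Disjoint (Finset.univ.filter fun a : V => G.dist a r = x)
            (Finset.univ.filter fun a : V => G.dist a r = y) := by
        intro x _ y _ hxy
        rw [Finset.disjoint_left]
        intro a ha1 ha2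
        simp only [Finset.mem_filter] at ha1 ha2
        omega
      have := Finset.card_biUnion hdisj
      have hsub : ((Finset.range (m + 1)).biUnion
          (fun k => Finset.univ.filter fun a : V => G.dist a r = k)).card ≤ n := by
        rw [← hn, ← Finset.card_univ]
        exact Finset.card_le_card (Finset.subset_univ _)
      rw [this] at hsub
      exact_mod_cast hsub
    calc c * ∑ k ∈ Finset.range (m + 1), (b : ℝ) ^ k
        = ∑ k ∈ Finset.range (m + 1), c * (b : ℝ) ^ k := by rw [Finset.mul_sum]
      _ ≤ ∑ k ∈ Finset.range (m + 1), ((Finset.univ.filter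
          fun a : V => G.dist a r = k).card : ℝ) := Finset.sum_le_sum h1
      _ ≤ n := h2
  set Sh : Finset V := Finset.univ.filter (fun z => (G.dist z r : ℝ) < (m : ℝ) - 2 * L)
    with hShdef
  have hShcard : (Sh.card : ℝ) ≤ n / 4 := by
    have hsub : Sh ⊆ I.biUnion (fun k => Finset.univ.filter fun a : V => G.dist a r = k) := by
      intro z hz
      rw [hShdef, Finset.mem_filter] at hz
      rw [Finset.mem_biUnion]
      refine ⟨G.dist z r, ?_, by simp⟩
      rw [hI, Finset.mem_filter, Finset.mem_range]
      have h1 : (G.dist z r : ℝ) < (m : ℝ) - 2 * L := hz.2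
      have h2 : (G.dist z r : ℝ) < (m : ℝ) := by linarith
      have h3 : G.dist z r < m := by exact_mod_cast h2
      exact ⟨by omega, h1⟩
    have h1 : (Sh.card : ℝ) ≤ ∑ k ∈ I, ((Finset.univ.filter
        fun a : V => G.dist a r = k).card : ℝ) := by
      have := (Finset.card_le_card hsub).trans Finset.card_biUnion_le
      exact_mod_cast this
    have h2 : ∑ k ∈ I, ((Finset.univ.filter fun a : V => G.dist a r = k).card : ℝ) ≤
        ∑ k ∈ I, c⁻¹ * (b : ℝ) ^ k :=
      Finset.sum_le_sum (fun k hk => (hsph k (hIm k hk).1).2)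
    have h3 : ∑ k ∈ I, c⁻¹ * (b : ℝ) ^ k = c⁻¹ * ∑ k ∈ I, (b : ℝ) ^ k := by
      rw [Finset.mul_sum]
    have h4 : (∑ k ∈ I, (b : ℝ) ^ k) * b ^ t₀ ≤ ∑ k ∈ Finset.range (m + 1), (b : ℝ) ^ k := by
      rw [Finset.sum_mul]
      exact hgeom
    have hbpos : (0 : ℝ) < b ^ t₀ := by positivity
    have hsumnn : (0 : ℝ) ≤ ∑ k ∈ I, (b : ℝ) ^ k :=
      Finset.sum_nonneg (fun k _ => by positivity)
    have h5 : ∑ k ∈ I, (b : ℝ) ^ k ≤ (c ^ 2 / 4) * ∑ k ∈ Finset.range (m + 1), (b : ℝ) ^ k := by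
      have h6 : (∑ k ∈ I, (b : ℝ) ^ k) * (4 / c ^ 2) ≤
          (∑ k ∈ I, (b : ℝ) ^ k) * b ^ t₀ := by
        exact mul_le_mul_of_nonneg_left hbt₀ hsumnn
      have h8 := h6.trans h4
      have h9 := mul_le_mul_of_nonneg_right h8 (by positivity : (0 : ℝ) ≤ c ^ 2 / 4)
      have h10 : (∑ k ∈ I, (b : ℝ) ^ k) * (4 / c ^ 2) * (c ^ 2 / 4) =
          ∑ k ∈ I, (b : ℝ) ^ k := by
        rw [mul_assoc, div_mul_div_comm, mul_comm (4 : ℝ) (c ^ 2), div_self (by positivity), mul_one]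
      linarith [h9, h10]
    have h7 : ∑ k ∈ Finset.range (m + 1), (b : ℝ) ^ k ≤ n / c := by
      rw [le_div_iff₀ hc0]
      linarith [hsumcard]
    have hsum2nn : (0 : ℝ) ≤ ∑ k ∈ Finset.range (m + 1), (b : ℝ) ^ k :=
      Finset.sum_nonneg (fun k _ => by positivity)
    have hcinv : (0 : ℝ) < c⁻¹ := by positivity
    calc (Sh.card : ℝ) ≤ c⁻¹ * ∑ k ∈ I, (b : ℝ) ^ k := by linarith [h1, h2, h3]
      _ ≤ c⁻¹ * ((c ^ 2 / 4) * ∑ k ∈ Finset.range (m + 1), (b : ℝ) ^ k) := by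
          exact mul_le_mul_of_nonneg_left h5 hcinv.le
      _ ≤ c⁻¹ * ((c ^ 2 / 4) * (n / c)) := by
          refine mul_le_mul_of_nonneg_left ?_ hcinv.le
          refine mul_le_mul_of_nonneg_left h7 (by positivity)
      _ = n / 4 := by field_simp
  -- deep vertices
  set Deep : Finset V := Finset.univ.filter (fun z => (m : ℝ) - 2 * L ≤ (G.dist z r : ℝ))
    with hDeepdef
  have hDeepcard : 3 / 4 * (n : ℝ) ≤ Deep.card := by
    have h1 : Sh.card + Deep.card = n := by
      rw [hShdef, hDeepdef, ← hn, ← Finset.card_univ]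
      have := Finset.card_filter_add_card_filter_not
        (s := Finset.univ) (p := fun z : V => (G.dist z r : ℝ) < (m : ℝ) - 2 * L)
      simp only [not_lt] at this
      exact this
    have h2 : (Sh.card : ℝ) + Deep.card = n := by exact_mod_cast h1
    linarith
  -- good partner sets
  set Good : V → Finset V := fun z => Finset.univ.filter (fun w : V =>
    G.dist z r + G.dist w r ≤ 2 * N + G.dist z w) with hGooddef
  have hGood : ∀ z ∈ Deep, c * n ≤ ((Good z).card : ℝ) := by
    intro z hz
    rw [hDeepdef, Finset.mem_filter] at hz
    have hdeep := hz.2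
    have hN1' : L + 5.5 * δ' + 2 * δ < (N : ℝ) + 1 := by rw [← hθdef]; exact hN1
    rcases le_total (G.dist z v₀) (G.dist z u₀) with hzv | hzv
    · exact core_one hconn hn hδ' hδ hL hN1' hthin hfour
        (fun u v α h1 h2 => (hbal1 u v α h1 h2).1) hdle p₀ hp₀ hDm h₀ hrr hdeep hzv
    · have hpw' : p₀.reverse.length = G.dist v₀ u₀ := by
        rw [SimpleGraph.Walk.length_reverse, hp₀, SimpleGraph.dist_comm]
      have hDm' : G.dist v₀ u₀ = 2 * m := by
        rw [SimpleGraph.dist_comm]; exact hDm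
      have hdia' : G.dist v₀ u₀ = G.diam := by
        rw [SimpleGraph.dist_comm]; exact h₀
      have hrr' : p₀.reverse.getVert m = r := by
        rw [SimpleGraph.Walk.getVert_reverse]
        have hlen : p₀.length - m = m := by omega
        rw [hlen, hrr]
      exact core_one hconn hn hδ' hδ hL hN1' hthin hfour
        (fun u v α h1 h2 => (hbal1 u v α h1 h2).1) hdle p₀.reverse hpw' hDm' hdia' hrr'
        hdeep hzv
  -- assembling the pair set
  have hcn16 : (16 : ℝ) ≤ c * n := by
    have h1 : c * (8 / c ^ 2) ≤ c * n := mul_le_mul_of_nonneg_left hn8 hc0.le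
    have h2 : c * (8 / c ^ 2) = 8 / c := by field_simp
    have h3 : (16 : ℝ) ≤ 8 / c := by rw [le_div_iff₀ hc0]; linarith
    linarith
  set GoodE : V → Finset V := fun z => (Good z).erase z with hGoodEdef
  set O : Finset (V × V) := Deep.biUnion (fun z => (GoodE z).image (fun w => (z, w)))
    with hOdef
  set S : Finset (Sym2 V) := O.image (fun p => s(p.1, p.2)) with hSdef
  have hOcard : (O.card : ℝ) = ∑ z ∈ Deep, ((GoodE z).card : ℝ) := by
    rw [hOdef, Finset.card_biUnion ?_]
    · push_cast
      refine Finset.sum_congr rfl (fun z _ => ?_)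
      rw [Finset.card_image_of_injective _ (fun w w' h => by simpa using h)]
    · intro z1 _ z2 _ hne
      rw [Function.onFun, Finset.disjoint_left]
      intro p hp1 hp2
      simp only [Finset.mem_image] at hp1 hp2
      obtain ⟨w1, _, rfl⟩ := hp1
      obtain ⟨w2, _, h2⟩ := hp2
      exact hne (congrArg Prod.fst h2).symm
  have hGE : ∀ z ∈ Deep, c * n - 1 ≤ ((GoodE z).card : ℝ) := by
    intro z hz
    have h1 := hGood z hz
    have h2 : (Good z).card ≤ ((Good z).erase z).card + 1 := by
      by_cases hm' : z ∈ Good z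
      · rw [Finset.card_erase_of_mem hm']
        omega
      · rw [Finset.erase_eq_of_notMem hm']
        omega
    have h3 : ((Good z).card : ℝ) ≤ (GoodE z).card + 1 := by
      have he' : GoodE z = (Good z).erase z := rfl
      rw [he']
      exact_mod_cast h2
    linarith
  have hOge : 3 / 4 * (n : ℝ) * (c * n - 1) ≤ (O.card : ℝ) := by
    rw [hOcard]
    have h1 : ∑ _z ∈ Deep, (c * (n : ℝ) - 1) ≤ ∑ z ∈ Deep, ((GoodE z).card : ℝ) :=
      Finset.sum_le_sum hGE
    rw [Finset.sum_const, nsmul_eq_mul] at h1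
    have hcn1 : (0 : ℝ) ≤ c * n - 1 := by linarith
    nlinarith [hDeepcard, hcn1, h1]
  have hS2 : (O.card : ℝ) ≤ 2 * (S.card : ℝ) := by
    have h := Finset.card_le_mul_card_image (s := O) (f := fun p : V × V => s(p.1, p.2)) 2 ?_
    · rw [hSdef]; exact_mod_cast h
    · intro e _
      induction e with
      | h a b' =>
        have hss : O.filter (fun p : V × V => s(p.1, p.2) = s(a, b')) ⊆
            {(a, b'), (b', a)} := by
          intro p hp
          rw [Finset.mem_filter] at hp
          rcases Sym2.eq_iff.mp hp.2 with ⟨h1, h2⟩ | ⟨h1, h2⟩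
          · simp [Finset.mem_insert, Prod.ext_iff, h1, h2]
          · simp [Finset.mem_insert, Prod.ext_iff, h1, h2]
        calc (O.filter (fun p : V × V => s(p.1, p.2) = s(a, b'))).card
            ≤ ({(a, b'), (b', a)} : Finset (V × V)).card := Finset.card_le_card hss
          _ ≤ 2 := by
              refine (Finset.card_insert_le _ _).trans ?_
              simp
  refine ⟨S, ?_, ?_⟩
  · -- cardinality bound
    have hsq : c ^ 2 ≤ 1 / 4 := by nlinarith
    have key : c ^ 3 * (n : ℝ) ^ 2 + (n : ℝ) ≤ c * (n : ℝ) ^ 2 := by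
      nlinarith [mul_le_mul_of_nonneg_right hsq
          (mul_nonneg hc0.le (sq_nonneg (n : ℝ))),
        mul_le_mul_of_nonneg_right hcn16 hn0.le]
    nlinarith [hOge, hS2, key]
  · -- the geodesic passage condition
    intro x y hxy q hq
    have hpair : G.dist x r + G.dist y r ≤ 2 * N + G.dist x y := by
      rw [hSdef, Finset.mem_image] at hxy
      obtain ⟨p, hpO, hpe⟩ := hxy
      rw [hOdef, Finset.mem_biUnion] at hpO
      obtain ⟨z, _, hp⟩ := hpO
      rw [Finset.mem_image] at hp
      obtain ⟨w, hw, rfl⟩ := hp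
      have hw' : w ∈ Good z := Finset.mem_of_mem_erase hw
      rw [hGooddef, Finset.mem_filter] at hw'
      have hcond := hw'.2
      have hcomm1 : G.dist z w = G.dist w z := SimpleGraph.dist_comm
      have hpe' : s(z, w) = s(x, y) := hpe
      rcases Sym2.eq_iff.mp hpe' with ⟨h1, h2⟩ | ⟨h1, h2⟩
      · rw [← h1, ← h2]; exact hcond
      · rw [← h1, ← h2]
        have hc2' : G.dist w z = G.dist z w := SimpleGraph.dist_comm
        omega
    obtain ⟨g, hg⟩ := hconn.exists_walk_length_eq_dist x r
    have htri1 : G.dist x y ≤ G.dist x r + G.dist r y := hconn.dist_triangle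
    have htri2 : G.dist y r ≤ G.dist y x + G.dist x r := hconn.dist_triangle
    have htri4 : G.dist x r ≤ G.dist x y + G.dist y r := hconn.dist_triangle
    have hcm1 : G.dist r y = G.dist y r := SimpleGraph.dist_comm
    have hcm2 : G.dist y x = G.dist x y := SimpleGraph.dist_comm
    set t : ℕ := G.dist x r + G.dist y r - G.dist x y with htdef
    have htt : t + G.dist x y = G.dist x r + G.dist y r := by omega
    have ht2N : t ≤ 2 * N := by omega
    have ht2x : t ≤ 2 * G.dist x r := by omega
    set k : ℕ := G.dist x r - (t + 1) / 2 with hkdef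
    have hk1 : k + (t + 1) / 2 = G.dist x r := by omega
    have hgk : (k : ℝ) ≤ gp G x y r := by
      unfold gp
      have c1 : (G.dist y x : ℝ) = G.dist x y := by exact_mod_cast hcm2
      have c3 : (t : ℕ) ≤ 2 * ((t + 1) / 2) := by omega
      have c3' : (t : ℝ) ≤ 2 * (((t + 1) / 2 : ℕ) : ℝ) := by exact_mod_cast c3
      have c4 : (k : ℝ) + (((t + 1) / 2 : ℕ) : ℝ) = G.dist x r := by exact_mod_cast hk1
      have c5 : (t : ℝ) + G.dist x y = G.dist x r + G.dist y r := by exact_mod_cast htt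
      have c6 : (G.dist r x : ℝ) = G.dist x r := by
        exact_mod_cast congrArg Nat.cast (SimpleGraph.dist_comm (u := r) (v := x))
      have c7 : (G.dist y r : ℝ) = G.dist r y := by
        exact_mod_cast congrArg Nat.cast (SimpleGraph.dist_comm (u := y) (v := r))
      linarith
    have hthin' := hthin x y r q g hq hg k hgk
    have hky : k ≤ G.dist x y := by omega
    refine ⟨q.getVert k, ?_, ?_⟩
    · rw [SimpleGraph.Walk.mem_support_iff_exists_getVert]
      exact ⟨k, rfl, by omega⟩
    · have hgr : G.dist (g.getVert k) r + k = g.length :=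
        aux_geo_right hconn hg (by omega)
      have htri3 : G.dist r (q.getVert k) ≤
          G.dist r (g.getVert k) + G.dist (g.getVert k) (q.getVert k) := hconn.dist_triangle
      have c8 : G.dist (g.getVert k) r + k = G.dist x r := by omega
      have c9 : (t + 1) / 2 ≤ N := by omega
      have c11 : (G.dist r (q.getVert k) : ℝ) ≤
          (G.dist r (g.getVert k) : ℝ) + (G.dist (g.getVert k) (q.getVert k) : ℝ) := by
        exact_mod_cast htri3
      have c12 : (G.dist r (g.getVert k) : ℝ) + k = G.dist x r := by
        have : G.dist r (g.getVert k) = G.dist (g.getVert k) r := SimpleGraph.dist_comm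
        rw [this]
        exact_mod_cast c8
      have c13 : (G.dist (g.getVert k) (q.getVert k) : ℝ) =
          (G.dist (q.getVert k) (g.getVert k) : ℝ) := by
        exact_mod_cast congrArg Nat.cast
          (SimpleGraph.dist_comm (u := g.getVert k) (v := q.getVert k))
      have c14 : (k : ℝ) + (((t + 1) / 2 : ℕ) : ℝ) = G.dist x r := by exact_mod_cast hk1
      have c15 : (((t + 1) / 2 : ℕ) : ℝ) ≤ N := by exact_mod_cast c9
      have hfin : (G.dist r (q.getVert k) : ℝ) ≤ N + δ' := by
        linarith [hthin', c11, c12, c13, c14, c15]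
      have hNθ' : (N : ℝ) ≤ L + 5.5 * δ' + 2 * δ := by rw [← hθdef]; exact hNθ
      linarith [hfin, hNθ']
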